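/- Let z0 = (0,0), zf = (1,0), v0 = vf = (1,0), and t_f = 2. Then there exists δ > 0 such that every admissible curve for the data (z0, v0, zf, vf, 2) has maximum curvature at least δ; that is, the infimum of Problem (P) for this data is strictly positive. (This furnishes a counterexample to the converse of the statement that Markov–Dubins solutions are minimax-curvature solutions, since with any curvature bound a ≥ 0 the minimal length between these oriented endpoints is 1 < 2.) -/

import Mathlib

open Set MeasureTheory Real

noncomputable section

/-- Points of the Euclidean plane. -/
abbrev Pt : Type := EuclideanSpace ℝ (Fin 2)

/-- The point of the plane with coordinates `(x, y)`. -/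
def pt (x y : ℝ) : Pt := (WithLp.equiv 2 (Fin 2 → ℝ)).symm ![x, y]

/-- Rotation of the plane by `π/2`. -/
def J (v : Pt) : Pt := pt (-(v 1)) (v 0)

/-- `z`, with derivative `z'`, is an admissible curve on `[t1, t2]` for the oriented
endpoint data `(p0, u0)`, `(p1, u1)`: it is differentiable with Lipschitz (hence
continuous) derivative `z'`, has unit speed, and matches the endpoint data. -/
def AdmissibleOn (t1 t2 : ℝ) (p0 u0 p1 u1 : Pt) (z z' : ℝ → Pt) : Prop :=
  (∀ t ∈ Icc t1 t2, HasDerivWithinAt z (z' t) (Icc t1 t2) t) ∧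
  (∃ K : NNReal, LipschitzOnWith K z' (Icc t1 t2)) ∧
  (∀ t ∈ Icc t1 t2, ‖z' t‖ = 1) ∧
  z t1 = p0 ∧ z t2 = p1 ∧ z' t1 = u0 ∧ z' t2 = u1

/-- The maximum curvature of a unit-speed curve with derivative `z'` on the set `s`:
the least Lipschitz constant of `z'` on `s` (equivalently, the essential supremum
of the norm of the second derivative). -/
def maxCurvOn (s : Set ℝ) (z' : ℝ → Pt) : ℝ :=
  sInf {a : ℝ | 0 ≤ a ∧ LipschitzOnWith (Real.toNNReal a) z' s}

/-- The piece `[s1, s2]` of the unit-speed curve with derivative `z'` is a circular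
arc of signed curvature `ω`: `z'' = ω • J z'` a.e. there. -/
def IsArcOn (z' : ℝ → Pt) (ω s1 s2 : ℝ) : Prop :=
  ∀ᵐ t ∂volume, t ∈ Ioo s1 s2 → HasDerivAt z' (ω • J (z' t)) t

/-- The piece `[s1, s2]` of the unit-speed curve with derivative `z'` is a straight
line segment: `z'` is constant there. -/
def IsLineOn (z' : ℝ → Pt) (s1 s2 : ℝ) : Prop :=
  ∀ s ∈ Icc s1 s2, ∀ t ∈ Icc s1 s2, z' s = z' t

/-- The piece `[s1, s2]` is a full circular loop of curvature `a`: a circular arc of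
signed curvature `±a` whose turning angle is a positive integer multiple of `2π`. -/
def IsFullLoopOn (z' : ℝ → Pt) (a s1 s2 : ℝ) : Prop :=
  ∃ ω : ℝ, |ω| = a ∧ IsArcOn z' ω s1 s2 ∧ ∃ k : ℕ, 0 < k ∧ a * (s2 - s1) = 2 * π * k

open intervalIntegral in
lemma stmt2_key (z z' : ℝ → Pt)
    (hd : ∀ t ∈ Icc (0:ℝ) 2, HasDerivWithinAt z (z' t) (Icc 0 2) t)
    (h0 : z 0 = pt 0 0) (h2 : z 2 = pt 1 0) (hv0 : z' 0 = pt 1 0)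
    (a : ℝ) (ha : 0 ≤ a) (hL : LipschitzOnWith (Real.toNNReal a) z' (Icc 0 2)) :
    1/2 ≤ a := by
  have hc : ContinuousOn z' (Icc (0:ℝ) 2) := hL.continuousOn
  have hsub : uIcc (0:ℝ) 2 ⊆ Icc 0 2 := by rw [uIcc_of_le (by norm_num)]
  have hint : IntervalIntegrable z' volume 0 2 :=
    (hc.mono hsub).intervalIntegrable
  have hftc : ∫ t in (0:ℝ)..2, z' t = z 2 - z 0 := by
    apply integral_eq_sub_of_hasDeriv_right_of_le (by norm_num)
    · exact fun t ht => (hd t ht).continuousWithinAt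
    · intro x hx
      exact (hd x (Ioo_subset_Icc_self hx)).mono_of_mem_nhdsWithin
        (Icc_mem_nhdsGT_of_mem ⟨hx.1.le, hx.2⟩)
    · exact hint
  have hbound : ∀ t ∈ Icc (0:ℝ) 2, ‖z' t - pt 1 0‖ ≤ a * t := by
    intro t ht
    have := hL.dist_le_mul t ht 0 (by constructor <;> norm_num)
    rw [dist_eq_norm] at this
    rw [← hv0]
    calc ‖z' t - z' 0‖ ≤ (Real.toNNReal a : ℝ) * dist t 0 := this
      _ = a * t := by
          rw [Real.coe_toNNReal a ha, Real.dist_eq, sub_zero, abs_of_nonneg ht.1]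
  have hci : IntervalIntegrable (fun _ : ℝ => pt 1 0) volume 0 2 :=
    intervalIntegrable_const
  have hnorm : ‖∫ t in (0:ℝ)..2, (z' t - pt 1 0)‖ ≤ 2 * a := by
    have hgi : IntervalIntegrable (fun t : ℝ => a * t) volume 0 2 :=
      (continuous_const.mul continuous_id).intervalIntegrable 0 2
    have h1 : ‖∫ t in (0:ℝ)..2, (z' t - pt 1 0)‖ ≤ |∫ t in (0:ℝ)..2, a * t| := by
      apply intervalIntegral.norm_integral_le_abs_of_norm_le _ hgi
      filter_upwards [ae_restrict_mem measurableSet_uIoc] with t ht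
      exact hbound t (Ioc_subset_Icc_self (by rwa [uIoc_of_le (by norm_num)] at ht))
    have h2' : (∫ t in (0:ℝ)..2, a * t) = 2 * a := by
      rw [intervalIntegral.integral_const_mul, integral_id]; ring
    rw [h2', abs_of_nonneg (by linarith)] at h1
    exact h1
  have hsplit : ∫ t in (0:ℝ)..2, (z' t - pt 1 0) =
      (z 2 - z 0) - (2:ℝ) • pt 1 0 := by
    rw [integral_sub hint hci, hftc, intervalIntegral.integral_const]
    norm_num
  have hzero : (pt 0 0 : Pt) = 0 := by ext i; fin_cases i <;> simp [pt]
  rw [hsplit, h0, h2, hzero, sub_zero] at hnorm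
  have hval : ‖pt 1 0 - (2:ℝ) • pt 1 0‖ = 1 := by
    have : pt 1 0 - (2:ℝ) • pt 1 0 = -(pt 1 0) := by module
    rw [this, norm_neg]
    simp [pt, EuclideanSpace.norm_eq, Fin.sum_univ_two]
  rw [hval] at hnorm
  linarith


/-- Counterexample to the converse of Theorem `MD&P`.
For the data `z0 = (0,0)`, `zf = (1,0)`, `v0 = vf = (1,0)` and length `t_f = 2`,
the infimum of Problem (P) is strictly positive: there is `δ > 0` such that every
admissible curve for this data has maximum curvature at least `δ`. -/
theorem stmt2 :
    ∃ δ : ℝ, 0 < δ ∧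
      ∀ z z' : ℝ → Pt,
        AdmissibleOn 0 2 (pt 0 0) (pt 1 0) (pt 1 0) (pt 1 0) z z' →
          δ ≤ maxCurvOn (Icc 0 2) z' := by
  refine ⟨1/2, by norm_num, fun z z' hadm => ?_⟩
  obtain ⟨hd, ⟨K, hK⟩, hu, h0, h2, hv0, hvf⟩ := hadm
  unfold maxCurvOn
  have hne : {a : ℝ | 0 ≤ a ∧ LipschitzOnWith (Real.toNNReal a) z' (Icc 0 2)}.Nonempty :=
    ⟨(K:ℝ), K.coe_nonneg, by rwa [Real.toNNReal_coe]⟩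
  apply le_csInf hne
  rintro a ⟨ha, hLa⟩
  exact stmt2_key z z' hd h0 h2 hv0 a ha hLa
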